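/- arXiv:1708.02059 — 2 statements merged into one kernel-verified Lean document; each statement's English description precedes it below -/
import Mathlib

section
/- Let F: ℝ → ℝ₊ be an even function with F(0)=0, nondecreasing on [0,∞), not identically zero, with t ↦ F(t)/t nonincreasing on (0,∞), and whose right derivative at 0 exists. Then F'₊(0) > 0. -/
theorem right_deriv_pos (F : ℝ → ℝ) (D : ℝ)
    (hnonneg : ∀ t, 0 ≤ F t)
    (heven : ∀ t, F (-t) = F t)
    (h0 : F 0 = 0)
    (hnontriv : ∃ t, F t ≠ 0)
    (hmono : MonotoneOn F (Set.Ici 0))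
    (hratio : AntitoneOn (fun t => F t / t) (Set.Ioi 0))
    (hderiv : HasDerivWithinAt F D (Set.Ici 0) 0) :
    0 < D := by
  -- find t₀ > 0 with F t₀ > 0
  obtain ⟨t, ht⟩ := hnontriv
  have ht0 : t ≠ 0 := by rintro rfl; exact ht h0
  set t₀ := |t| with ht₀def
  have ht₀pos : 0 < t₀ := abs_pos.mpr ht0
  have hFt₀ : 0 < F t₀ := by
    rcases abs_cases t with ⟨h, _⟩ | ⟨h, _⟩
    · rw [ht₀def, h]; exact lt_of_le_of_ne (hnonneg t) (Ne.symm ht)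
    · rw [ht₀def, h, heven]; exact lt_of_le_of_ne (hnonneg t) (Ne.symm ht)
  set c := F t₀ / t₀ with hcdef
  have hc : 0 < c := div_pos hFt₀ ht₀pos
  -- D is the limit of slopes
  have htend : Filter.Tendsto (slope F 0) (nhdsWithin 0 (Set.Ici 0 \ {0})) (nhds D) :=
    hasDerivWithinAt_iff_tendsto_slope.mp hderiv
  have hset : Set.Ici (0:ℝ) \ {0} = Set.Ioi 0 := by
    ext x; simp [Set.mem_diff, lt_iff_le_and_ne, eq_comm]
  rw [hset] at htend
  have hev : ∀ᶠ x in nhdsWithin (0:ℝ) (Set.Ioi 0), c ≤ slope F 0 x := by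
    filter_upwards [Ioo_mem_nhdsGT_of_mem (Set.left_mem_Ico.mpr ht₀pos)] with x hx
    have hx0 : 0 < x := hx.1
    have := hratio hx0 (Set.mem_Ioi.mpr ht₀pos) hx.2.le
    simpa [hcdef, slope_def_field, h0, div_eq_mul_inv] using this
  have hle : c ≤ D := ge_of_tendsto htend hev
  exact lt_of_lt_of_le hc hle
end

section
/- Let ζ > 0, β > 0 with βζ < 1/2, and let F be the MCP function F(t) = |t| − ζt² for |t| ≤ 1/(2ζ), F(t) = 1/(4ζ) otherwise. For every v ∈ ℝ, the function x ↦ βF(x) + (1/2)(x−v)² is strictly convex and its unique minimizer is given by: 0 if |v| < β; (v − β·sign(v))/(1 − 2βζ) if β ≤ |v| ≤ 1/(2ζ); and v if |v| > 1/(2ζ) (the firm-shrinkage operator). -/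
noncomputable def mcp (ζ : ℝ) (t : ℝ) : ℝ :=
  if |t| ≤ 1 / (2 * ζ) then |t| - ζ * t ^ 2 else 1 / (4 * ζ)

noncomputable def firmShrinkage (ζ β : ℝ) (v : ℝ) : ℝ :=
  if |v| < β then 0
  else if |v| ≤ 1 / (2 * ζ) then (v - β * Real.sign v) / (1 - 2 * β * ζ)
  else v

/-- Key lower bound: for `|s| ≤ 1`, `s*x - ζ*x^2 ≤ mcp ζ x`. -/
lemma mcp_key (ζ : ℝ) (hζ : 0 < ζ) (s x : ℝ) (hs : |s| ≤ 1) :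
    s * x - ζ * x ^ 2 ≤ mcp ζ x := by
  have hsx : s * x ≤ |x| := by
    calc s * x ≤ |s * x| := le_abs_self _
    _ = |s| * |x| := abs_mul _ _
    _ ≤ 1 * |x| := mul_le_mul_of_nonneg_right hs (abs_nonneg _)
    _ = |x| := one_mul _
  unfold mcp
  split_ifs with h
  · linarith
  · push_neg at h
    have hs2 : s ^ 2 ≤ 1 := by nlinarith [abs_nonneg s, sq_abs s]
    rw [le_div_iff₀ (by positivity)]
    nlinarith [sq_nonneg (2 * ζ * x - s)]

/-- Convexity inequality for `u ↦ (max u 0)^2`. -/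
lemma maxsq_key (u w a b : ℝ) (ha : 0 ≤ a) (hb : 0 ≤ b) (hab : a + b = 1) :
    (max (a * u + b * w) 0) ^ 2 ≤ a * (max u 0) ^ 2 + b * (max w 0) ^ 2 := by
  set X := max u 0 with hX
  set W := max w 0 with hW
  have hX1 : u ≤ X := le_max_left _ _
  have hX0 : 0 ≤ X := le_max_right _ _
  have hW1 : w ≤ W := le_max_left _ _
  have hW0 : 0 ≤ W := le_max_right _ _
  have hle : max (a * u + b * w) 0 ≤ a * X + b * W := by
    apply max_le
    · exact add_le_add (mul_le_mul_of_nonneg_left hX1 ha) (mul_le_mul_of_nonneg_left hW1 hb)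
    · positivity
  have h0 : 0 ≤ max (a * u + b * w) 0 := le_max_right _ _
  calc (max (a * u + b * w) 0) ^ 2 ≤ (a * X + b * W) ^ 2 := by nlinarith
  _ ≤ a * X ^ 2 + b * W ^ 2 := by nlinarith [sq_nonneg (X - W), mul_nonneg ha hb]

set_option maxHeartbeats 1600000 in
theorem firmShrinkage_is_prox (ζ β : ℝ) (hζ : 0 < ζ) (hβ : 0 < β)
    (hβζ : β * ζ < 1 / 2) (v : ℝ) :
    StrictConvexOn ℝ Set.univ (fun x => β * mcp ζ x + (1 / 2) * (x - v) ^ 2) ∧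
      ∀ x : ℝ, x ≠ firmShrinkage ζ β v →
        β * mcp ζ (firmShrinkage ζ β v) + (1 / 2) * (firmShrinkage ζ β v - v) ^ 2 <
          β * mcp ζ x + (1 / 2) * (x - v) ^ 2 := by
  have hζ' : (2 : ℝ) * ζ ≠ 0 := by positivity
  have ht : (0:ℝ) < 1 / (2 * ζ) := by positivity
  have hβc : β < 1 / (2 * ζ) := by
    rw [lt_div_iff₀ (by positivity)]; nlinarith
  -- pointwise decomposition of the objective
  have hfd : ∀ z : ℝ, β * mcp ζ z + (1 / 2) * (z - v) ^ 2
      = β * |z| + β * ζ * (max (z - 1 / (2 * ζ)) 0) ^ 2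
        + β * ζ * (max (-z - 1 / (2 * ζ)) 0) ^ 2
        + ((1 / 2 - β * ζ) * z ^ 2 - v * z + (1 / 2) * v ^ 2) := by
    intro z
    unfold mcp
    split_ifs with h
    · rw [abs_le] at h
      rw [max_eq_right (by linarith), max_eq_right (by linarith)]
      ring
    · push_neg at h
      rcases le_or_gt 0 z with hz | hz
      · have hzc : 1 / (2 * ζ) < z := by rwa [abs_of_nonneg hz] at h
        rw [max_eq_left (by linarith), max_eq_right (by linarith), abs_of_nonneg hz]
        field_simp
        ring
      · have hzc : 1 / (2 * ζ) < -z := by rwa [abs_of_neg hz] at h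
        rw [max_eq_right (by linarith), max_eq_left (by linarith), abs_of_neg hz]
        field_simp
        ring
  constructor
  · -- strict convexity
    refine ⟨convex_univ, ?_⟩
    intro x _ y _ hxy a b ha hb hab
    simp only [smul_eq_mul]
    rw [hfd, hfd, hfd]
    have H1 : |a * x + b * y| ≤ a * |x| + b * |y| := by
      calc |a * x + b * y| ≤ |a * x| + |b * y| := abs_add_le _ _
      _ = a * |x| + b * |y| := by
          rw [abs_mul, abs_mul, abs_of_nonneg ha.le, abs_of_nonneg hb.le]
    have H2 : (max (a * x + b * y - 1 / (2 * ζ)) 0) ^ 2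
        ≤ a * (max (x - 1 / (2 * ζ)) 0) ^ 2 + b * (max (y - 1 / (2 * ζ)) 0) ^ 2 := by
      have e : a * x + b * y - 1 / (2 * ζ)
          = a * (x - 1 / (2 * ζ)) + b * (y - 1 / (2 * ζ)) := by
        linear_combination (1 / (2 * ζ)) * hab
      rw [e]
      exact maxsq_key _ _ _ _ ha.le hb.le hab
    have H3 : (max (-(a * x + b * y) - 1 / (2 * ζ)) 0) ^ 2
        ≤ a * (max (-x - 1 / (2 * ζ)) 0) ^ 2 + b * (max (-y - 1 / (2 * ζ)) 0) ^ 2 := by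
      have e : -(a * x + b * y) - 1 / (2 * ζ)
          = a * (-x - 1 / (2 * ζ)) + b * (-y - 1 / (2 * ζ)) := by
        linear_combination (1 / (2 * ζ)) * hab
      rw [e]
      exact maxsq_key _ _ _ _ ha.le hb.le hab
    have hb1 : b = 1 - a := by linarith
    subst hb1
    have hxy2 : (0:ℝ) < (x - y) ^ 2 := sq_pos_of_ne_zero (sub_ne_zero.mpr hxy)
    have H4 : (1 / 2 - β * ζ) * (a * x + (1 - a) * y) ^ 2 - v * (a * x + (1 - a) * y)
          + (1 / 2) * v ^ 2
        < a * ((1 / 2 - β * ζ) * x ^ 2 - v * x + (1 / 2) * v ^ 2)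
          + (1 - a) * ((1 / 2 - β * ζ) * y ^ 2 - v * y + (1 / 2) * v ^ 2) := by
      have key : a * ((1 / 2 - β * ζ) * x ^ 2 - v * x + (1 / 2) * v ^ 2)
          + (1 - a) * ((1 / 2 - β * ζ) * y ^ 2 - v * y + (1 / 2) * v ^ 2)
          - ((1 / 2 - β * ζ) * (a * x + (1 - a) * y) ^ 2 - v * (a * x + (1 - a) * y)
            + (1 / 2) * v ^ 2)
          = (1 / 2 - β * ζ) * (a * (1 - a) * (x - y) ^ 2) := by ring
      have hp : (0:ℝ) < (1 / 2 - β * ζ) * (a * (1 - a) * (x - y) ^ 2) :=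
        mul_pos (by linarith) (mul_pos (mul_pos ha hb) hxy2)
      linarith
    have H1' : β * |a * x + (1 - a) * y| ≤ β * (a * |x| + (1 - a) * |y|) :=
      mul_le_mul_of_nonneg_left H1 hβ.le
    have hβζ0 : (0:ℝ) ≤ β * ζ := by positivity
    have H2' := mul_le_mul_of_nonneg_left H2 hβζ0
    have H3' := mul_le_mul_of_nonneg_left H3 hβζ0
    linarith [H1', H2', H3', H4]
  · -- minimality
    intro x hx
    unfold firmShrinkage at *
    split_ifs at hx ⊢ with h1 h2
    · -- |v| < β : minimizer 0
      have h0 : mcp ζ 0 = 0 := by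
        unfold mcp
        rw [if_pos (by rw [abs_zero]; positivity)]
        norm_num
      rw [h0]
      have hkey := mcp_key ζ hζ (v / β) x (by
        rw [abs_div, abs_of_pos hβ, div_le_one hβ]; exact h1.le)
      have hβm : β * (v / β * x - ζ * x ^ 2) ≤ β * mcp ζ x :=
        mul_le_mul_of_nonneg_left hkey hβ.le
      have hvx : β * (v / β * x) = v * x := by field_simp
      have hx2 : (0:ℝ) < x ^ 2 := sq_pos_of_ne_zero hx
      nlinarith
    · -- β ≤ |v| ≤ 1/(2ζ) : interior case
      push_neg at h1
      have hv0 : v ≠ 0 := by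
        intro h; rw [h, abs_zero] at h1; linarith
      set s : ℝ := Real.sign v with hsdef
      have hs : s = 1 ∨ s = -1 := by
        rcases lt_or_gt_of_ne hv0 with h | h
        · right; rw [hsdef, Real.sign_of_neg h]
        · left; rw [hsdef, Real.sign_of_pos h]
      have hs2 : s ^ 2 = 1 := by rcases hs with h | h <;> rw [h] <;> ring
      have hsabs : |s| = 1 := by rcases hs with h | h <;> rw [h] <;> simp
      have hsv : s * v = |v| := by
        rcases lt_or_gt_of_ne hv0 with h | h
        · rw [hsdef, Real.sign_of_neg h, abs_of_neg h]; ring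
        · rw [hsdef, Real.sign_of_pos h, abs_of_pos h]; ring
      set m : ℝ := (v - β * s) / (1 - 2 * β * ζ) with hmdef
      have hden : (0:ℝ) < 1 - 2 * β * ζ := by linarith
      have hmden : m * (1 - 2 * β * ζ) = v - β * s := by
        rw [hmdef, div_mul_cancel₀ _ hden.ne']
      have hsmval : s * m * (1 - 2 * β * ζ) = |v| - β := by
        linear_combination s * hmden + hsv - β * hs2
      have hsm0 : 0 ≤ s * m := by nlinarith
      have hsm : s * m = |m| := by
        rw [← abs_of_nonneg hsm0, abs_mul, hsabs, one_mul]
      have hmabs : |m| ≤ 1 / (2 * ζ) := by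
        rw [← hsm]
        have e1 : s * m = (|v| - β) / (1 - 2 * β * ζ) := by
          rw [eq_div_iff hden.ne']
          linarith [hsmval]
        rw [e1, div_le_div_iff₀ hden (by positivity)]
        have h2ζ : 2 * ζ * |v| ≤ 2 * ζ * (1 / (2 * ζ)) :=
          mul_le_mul_of_nonneg_left h2 (by positivity)
        have h2ζ' : 2 * ζ * (1 / (2 * ζ)) = 1 := by field_simp
        nlinarith
      have hmcpm : mcp ζ m = s * m - ζ * m ^ 2 := by
        unfold mcp; rw [if_pos hmabs, ← hsm]
      have hkey := mcp_key ζ hζ s x hsabs.le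
      rw [hmcpm]
      have hβm : β * (s * x - ζ * x ^ 2) ≤ β * mcp ζ x :=
        mul_le_mul_of_nonneg_left hkey hβ.le
      have hquad : β * (s * m - ζ * m ^ 2) + (1/2) * (m - v) ^ 2
          + (1/2 - β * ζ) * (x - m) ^ 2
          = β * (s * x - ζ * x ^ 2) + (1/2) * (x - v) ^ 2 := by
        linear_combination (m - x) * hmden
      have hpos : (0:ℝ) < (1/2 - β * ζ) * (x - m) ^ 2 :=
        mul_pos (by linarith) (sq_pos_of_ne_zero (sub_ne_zero.mpr hx))
      linarith
    · -- |v| > 1/(2ζ) : minimizer v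
      push_neg at h1 h2
      have hmcpv : mcp ζ v = 1 / (4 * ζ) := by
        unfold mcp; rw [if_neg (not_le.mpr h2)]
      rw [hmcpv]
      unfold mcp
      split_ifs with h3
      · -- |x| ≤ 1/(2ζ)
        have hxv : |v| - |x| ≤ |x - v| := by
          have := abs_sub_abs_le_abs_sub v x
          rwa [abs_sub_comm] at this
        have hsq : (|v| - |x|) ^ 2 ≤ (x - v) ^ 2 := by
          rw [← sq_abs (x - v)]
          apply sq_le_sq' _ hxv
          nlinarith [abs_nonneg x, abs_nonneg (x - v)]
        obtain ⟨t, htdef⟩ : ∃ t : ℝ, t = 1 / (2 * ζ) := ⟨_, rfl⟩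
        rw [← htdef] at h2 h3
        have hζt : 2 * ζ * t = 1 := by rw [htdef]; field_simp
        have h4 : β * (1 / (4 * ζ)) = β * ζ * t ^ 2 := by
          rw [htdef]; field_simp; ring
        rw [h4, ← sq_abs x]
        have ht0 : 0 < t := by rw [htdef]; positivity
        have hstep : (t - |x|) ^ 2 < (|v| - |x|) ^ 2 := by
          nlinarith [abs_nonneg x]
        have hhalf : β * ζ * (t - |x|) ^ 2 ≤ (1/2) * (t - |x|) ^ 2 := by
          nlinarith [sq_nonneg (t - |x|)]
        have hexp : β * (|x| - ζ * |x| ^ 2) = β * ζ * t ^ 2 - β * ζ * (t - |x|) ^ 2 := by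
          linear_combination (-(β * |x|)) * hζt
        linarith
      · -- |x| > 1/(2ζ)
        have : (0:ℝ) < (x - v) ^ 2 := sq_pos_of_ne_zero (sub_ne_zero.mpr hx)
        linarith
end
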